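/- For a metric cost c, the Cheapest Insertion Algorithm applied to a vertex set V produces a Hamiltonian cycle whose total cost is at most 2 · OPT, where OPT is the cost of a minimum-cost Hamiltonian cycle on V. -/

import Mathlib

/-- Length of a cyclic tour given by a list. -/
def cycleLength {V : Type*} (c : V → V → ℝ) (l : List V) : ℝ :=
  ((l.zip (l.rotate 1)).map fun p => c p.1 p.2).sum

namespace CIA
variable {V : Type*} (c : V → V → ℝ)

lemma insertIdx_eq : ∀ (n : ℕ) (l : List V) (a : V), n ≤ l.length →
    l.insertIdx n a = l.take n ++ a :: l.drop n := by
  intro n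
  induction n with
  | zero => intro l a _; simp
  | succ m ih =>
      intro l a h
      cases l with
      | nil => simp at h
      | cons x xs =>
          rw [List.insertIdx_succ_cons, ih xs a (by simpa using h)]
          simp

lemma cycleLength_eq_sum (l : List V) :
    cycleLength c l = ∑ i : Fin l.length, c (l.get i)
      (l.get ⟨(↑i + 1) % l.length, Nat.mod_lt _ (Nat.lt_of_le_of_lt (Nat.zero_le _) i.isLt)⟩) := by
  rw [cycleLength, ← List.sum_ofFn]
  congr 1
  apply List.ext_getElem
  · simp
  · intro i h1 h2
    have hlen : (l.zip (l.rotate 1)).length = l.length := by simp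
    have hi : i < l.length := by simpa [hlen] using h1
    rw [List.getElem_map, List.getElem_zip, List.getElem_ofFn]
    have : (l.rotate 1)[i]'(by simpa using hi) = l[(i + 1) % l.length]'(Nat.mod_lt _ (by omega)) :=
      List.getElem_rotate l 1 i (by simpa using hi)
    rw [this]
    simp [List.get_eq_getElem]

def pathLength : List V → ℝ
  | [] => 0
  | [_] => 0
  | a :: b :: rest => c a b + pathLength (b :: rest)

lemma getLast_cons_cons (x y : V) (ys : List V) :
    (x :: y :: ys).getLast (by simp) = (y :: ys).getLast (by simp) :=
  List.getLast_cons (by simp)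

lemma zip_aux (z : V) : ∀ (xs : List V) (x : V),
    (((x::xs).zip (xs ++ [z])).map fun p => c p.1 p.2).sum
      = pathLength c (x::xs) + c ((x::xs).getLast (by simp)) z := by
  intro xs
  induction xs with
  | nil => intro x; simp [pathLength]
  | cons y ys ih =>
      intro x
      simp only [List.cons_append, List.zip_cons_cons, List.map_cons, List.sum_cons, ih y,
        pathLength, getLast_cons_cons]
      ring

lemma cycleLength_eq_path (l : List V) (h : l ≠ []) :
    cycleLength c l = pathLength c l + c (l.getLast h) (l.head h) := by
  match l with
  | x :: xs =>
    have : (x::xs).rotate 1 = xs ++ [x] := by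
      simpa using List.rotate_eq_drop_append_take (l := x::xs) (n := 1) (by simp)
    rw [cycleLength, this, zip_aux]
    simp

lemma pathLength_append_singleton : ∀ (m : List V) (h : m ≠ []) (k : V),
    pathLength c (m ++ [k]) = pathLength c m + c (m.getLast h) k := by
  intro m
  induction m with
  | nil => simp
  | cons x xs ih =>
      intro h k
      cases xs with
      | nil => simp [pathLength]
      | cons y ys =>
          have h2 : ((x :: y :: ys) ++ [k]) = x :: ((y::ys) ++ [k]) := by simp
          have h3 : (y::ys) ++ [k] = y :: (ys ++ [k]) := by simp
          rw [h2, h3, pathLength, ← h3, ih (by simp) k, getLast_cons_cons, pathLength]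
          ring

lemma cycleLength_append_singleton (m : List V) (h : m ≠ []) (k : V) :
    cycleLength c (m ++ [k]) =
      cycleLength c m + c (m.getLast h) k + c k (m.head h) - c (m.getLast h) (m.head h) := by
  rw [cycleLength_eq_path c (m ++ [k]) (by simp), cycleLength_eq_path c m h,
    pathLength_append_singleton c m h k]
  rw [List.getLast_append, List.head_append_of_ne_nil h]
  simp
  ring

lemma cycleLength_rotate_one (l : List V) : cycleLength c (l.rotate 1) = cycleLength c l := by
  cases l with
  | nil => simp
  | cons x xs =>
      have hrot : (x::xs).rotate 1 = xs ++ [x] := by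
        simpa using List.rotate_eq_drop_append_take (l := x::xs) (n := 1) (by simp)
      cases xs with
      | nil => simp
      | cons y ys =>
          rw [hrot, cycleLength_append_singleton c (y::ys) (by simp) x,
            cycleLength_eq_path c (y::ys) (by simp),
            cycleLength_eq_path c (x::y::ys) (by simp)]
      
          rw [getLast_cons_cons]
          simp only [List.head_cons, pathLength]
          ring

lemma cycleLength_rotate (l : List V) (t : ℕ) : cycleLength c (l.rotate t) = cycleLength c l := by
  induction t generalizing l with
  | zero => simp
  | succ s ih =>
      have : l.rotate (s+1) = (l.rotate 1).rotate s := by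
        rw [List.rotate_rotate, Nat.add_comm]
      rw [this, ih (l.rotate 1), cycleLength_rotate_one]

lemma cycleLength_insertIdx (l : List V) (idx : ℕ) (hidx : idx < l.length) (k : V) :
    cycleLength c (l.insertIdx (idx+1) k) =
      cycleLength c l + c (l.get ⟨idx, hidx⟩) k
        + c k (l.get ⟨(idx+1) % l.length, Nat.mod_lt _ (by omega)⟩)
        - c (l.get ⟨idx, hidx⟩) (l.get ⟨(idx+1) % l.length, Nat.mod_lt _ (by omega)⟩) := by
  have hL : 0 < l.length := by omega
  have hpos : idx + 1 ≤ l.length := hidx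
  have h1 : l.insertIdx (idx+1) k = (l.take (idx+1) ++ [k]) ++ l.drop (idx+1) := by
    rw [insertIdx_eq (idx+1) l k hpos]; simp
  have hlen_take : (l.take (idx+1) ++ [k]).length = idx + 2 := by
    simp [Nat.min_eq_left hpos]
  have h2 : cycleLength c (l.insertIdx (idx+1) k)
      = cycleLength c (((l.take (idx+1) ++ [k]) ++ l.drop (idx+1)).rotate (idx+2)) := by
    rw [cycleLength_rotate]; rw [h1]
  rw [h2]
  have h3 : ((l.take (idx+1) ++ [k]) ++ l.drop (idx+1)).rotate (idx+2)
      = (l.drop (idx+1) ++ l.take (idx+1)) ++ [k] := by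
    have := List.rotate_append_length_eq (l.take (idx+1) ++ [k]) (l.drop (idx+1))
    rw [hlen_take] at this
    rw [this]; simp
  rw [h3]
  have h4 : l.drop (idx+1) ++ l.take (idx+1) = l.rotate (idx+1) :=
    (List.rotate_eq_drop_append_take hpos).symm
  rw [h4]
  have hmne : l.rotate (idx+1) ≠ [] := by
    have hlr : (l.rotate (idx+1)).length = l.length := by simp
    intro h; rw [h] at hlr; simp at hlr; omega
  rw [cycleLength_append_singleton c _ hmne k, cycleLength_rotate]
  have hlenrot : (l.rotate (idx+1)).length = l.length := by simp
  have hlast : (l.rotate (idx+1)).getLast hmne = l.get ⟨idx, hidx⟩ := by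
    rw [List.getLast_eq_getElem, List.getElem_rotate]
    have hidx2 : ((l.rotate (idx+1)).length - 1 + (idx+1)) % l.length = idx := by
      rw [hlenrot]
      have : l.length - 1 + (idx + 1) = l.length + idx := by omega
      rw [this, Nat.add_mod_left, Nat.mod_eq_of_lt hidx]
    simp only [List.get_eq_getElem]
    congr 1
  have hhead : (l.rotate (idx+1)).head hmne
      = l.get ⟨(idx+1) % l.length, Nat.mod_lt _ (by omega)⟩ := by
    rw [List.head_eq_getElem, List.getElem_rotate]
    simp only [List.get_eq_getElem]
    congr 1
    simp
  rw [hlast, hhead]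

lemma cycleLength_insertIdx_le (hsymm : ∀ a b : V, c a b = c b a)
    (htri : ∀ a b d : V, c a d ≤ c a b + c b d)
    (l : List V) (idx : ℕ) (hidx : idx < l.length) (k : V) :
    cycleLength c (l.insertIdx (idx+1) k) ≤ cycleLength c l + 2 * c (l.get ⟨idx, hidx⟩) k := by
  rw [cycleLength_insertIdx c l idx hidx k]
  have h1 := htri k (l.get ⟨idx, hidx⟩) (l.get ⟨(idx+1) % l.length, Nat.mod_lt _ (by omega)⟩)
  have h2 := hsymm k (l.get ⟨idx, hidx⟩)
  linarith


def nxt {L : ℕ} (i : Fin L) : Fin L := ⟨(i.val + 1) % L, Nat.mod_lt _ i.pos⟩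

lemma exists_change {L : ℕ} (g : Fin L → ℕ) (hnc : ∃ a b : Fin L, g a ≠ g b)
    (v : ℕ) (hv : ∃ p, g p = v) : ∃ q : Fin L, g q = v ∧ g (nxt q) ≠ v := by
  by_contra hcon
  push_neg at hcon
  obtain ⟨p, hp⟩ := hv
  obtain ⟨a, b, hab⟩ := hnc
  have hL : 0 < L := p.pos
  have key : ∀ t : ℕ, g ⟨(p.val + t) % L, Nat.mod_lt _ hL⟩ = v := by
    intro t
    induction t with
    | zero => simpa [Nat.mod_eq_of_lt p.isLt] using hp
    | succ s ih =>
        have h2 := hcon _ ih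
        have : nxt (⟨(p.val + s) % L, Nat.mod_lt _ hL⟩ : Fin L)
            = ⟨(p.val + (s+1)) % L, Nat.mod_lt _ hL⟩ := by
          apply Fin.ext
          simp only [nxt]
          rw [Nat.mod_add_mod]
          congr 1
        rw [this] at h2
        exact h2
  have hall : ∀ b : Fin L, g b = v := by
    intro b
    have := key (L - p.val + b.val)
    have harith : (p.val + (L - p.val + b.val)) % L = b.val := by
      have h1 : p.val + (L - p.val + b.val) = L + b.val := by omega
      rw [h1, Nat.add_mod_left, Nat.mod_eq_of_lt b.isLt]
    rw [show (⟨(p.val + (L - p.val + b.val)) % L, Nat.mod_lt _ hL⟩ : Fin L) = b from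
      Fin.ext harith] at this
    exact this
  exact hab (by rw [hall a, hall b])

end CIA

open CIA

/-- A cheapest-insertion step: a node k not in the tour is inserted at some position, and
the resulting tour is no longer than any tour obtained by inserting any node not in the
tour at any position. -/
def IsCheapestInsertionStep {V : Type*} (c : V → V → ℝ) (l l' : List V) : Prop :=
  ∃ (k : V) (pos : ℕ), k ∉ l ∧ pos ≤ l.length ∧ l' = l.insertIdx pos k ∧
    ∀ (k' : V) (pos' : ℕ), k' ∉ l → pos' ≤ l.length →
      cycleLength c l' ≤ cycleLength c (l.insertIdx pos' k')

/-- 2-approximation guarantee for the Cheapest Insertion Algorithm: for a metric cost c,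
starting from a minimum two-node tour and performing cheapest-insertion steps until the
tour is Hamiltonian, the final tour costs at most twice the optimal Hamiltonian cycle. -/
theorem stmt_9 {V : Type*} [Fintype V] [DecidableEq V] (c : V → V → ℝ)
    (hnonneg : ∀ a b : V, 0 ≤ c a b)
    (hsymm : ∀ a b : V, c a b = c b a)
    (htri : ∀ a b d : V, c a d ≤ c a b + c b d)
    (hself : ∀ a : V, c a a = 0)
    (hcard : 3 ≤ Fintype.card V)
    (T : ℕ → List V) (n : ℕ)
    (hinit : ∃ i j : V, i ≠ j ∧ T 0 = [i, j] ∧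
      ∀ i' j' : V, i' ≠ j' → c i j + c j i ≤ c i' j' + c j' i')
    (hstep : ∀ m < n, IsCheapestInsertionStep c (T m) (T (m + 1)))
    (hfin : (T n).Nodup ∧ ∀ v : V, v ∈ T n) :
    cycleLength c (T n) ≤
      2 * sInf {x : ℝ | ∃ l : List V, l.Nodup ∧ (∀ v : V, v ∈ l) ∧ x = cycleLength c l} := by
  classical
  obtain ⟨hnd_n, hcm_n⟩ := hfin
  obtain ⟨i0, j0, hij0, hT0, hmin⟩ := hinit
  set Ω : Set ℝ := {x : ℝ | ∃ l : List V, l.Nodup ∧ (∀ v : V, v ∈ l) ∧ x = cycleLength c l}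
    with hΩ
  have hne : Ω.Nonempty :=
    ⟨cycleLength c Finset.univ.toList, Finset.univ.toList, Finset.nodup_toList _,
      fun v => Finset.mem_toList.mpr (Finset.mem_univ v), rfl⟩
  have hbdd : BddBelow Ω := by
    refine ⟨0, fun x hx => ?_⟩
    obtain ⟨l, _, _, rfl⟩ := hx
    apply List.sum_nonneg
    intro y hy
    obtain ⟨p, _, rfl⟩ := List.mem_map.mp hy
    exact hnonneg _ _
  -- basic lengths
  have hlen : ∀ m, m ≤ n → (T m).length = m + 2 := by
    intro m
    induction m with
    | zero => intro _; rw [hT0]; rfl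
    | succ s ih =>
        intro h
        obtain ⟨k, pos, hk, hpos, heq, _⟩ := hstep s (by omega)
        rw [heq, List.length_insertIdx, if_pos hpos, ih (by omega)]
  have hTn_card : (T n).length = Fintype.card V := by
    have h1 : (T n).toFinset = Finset.univ :=
      Finset.eq_univ_iff_forall.mpr (fun v => List.mem_toFinset.mpr (hcm_n v))
    rw [← List.toFinset_card_of_nodup hnd_n, h1, Finset.card_univ]
  have hn2 : n + 2 = Fintype.card V := by rw [← hTn_card, hlen n le_rfl]
  have hn1 : 1 ≤ n := by omega
  -- membership monotone
  have hstep_mem : ∀ m, m < n → ∀ v, v ∈ T m → v ∈ T (m+1) := by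
    intro m hm v hv
    obtain ⟨k, pos, hk, hpos, heq, _⟩ := hstep m hm
    rw [heq]; exact (List.mem_insertIdx hpos).mpr (Or.inr hv)
  have hmono : ∀ m m', m ≤ m' → m' ≤ n → ∀ v, v ∈ T m → v ∈ T m' := by
    intro m m' hmm'
    induction hmm' with
    | refl => exact fun _ v hv => hv
    | @step s hss ih =>
        intro hsn v hv
        exact hstep_mem s (by omega) v (ih (by omega) v hv)
  -- inserted nodes
  have hkm : ∀ m, m < n → ∃ k, k ∉ T m ∧ k ∈ T (m+1) := by
    intro m hm
    obtain ⟨k, pos, hk, hpos, heq, _⟩ := hstep m hm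
    exact ⟨k, hk, by rw [heq]; exact (List.mem_insertIdx hpos).mpr (Or.inl rfl)⟩
  choose km hkm1 hkm2 using hkm
  -- step bound
  have hΔ : ∀ m, m < n → ∀ u v : V, u ∈ T m → v ∉ T m →
      cycleLength c (T (m+1)) ≤ cycleLength c (T m) + 2 * c u v := by
    intro m hm u v hu hv
    obtain ⟨k, pos, hk, hpos, heq, hminstep⟩ := hstep m hm
    obtain ⟨iu, hiu⟩ := List.mem_iff_get.mp hu
    have h1 := hminstep v (iu.val + 1) hv iu.isLt
    have h2 := CIA.cycleLength_insertIdx_le c hsymm htri (T m) iu.val iu.isLt v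
    have h3 : (T m).get ⟨iu.val, iu.isLt⟩ = u := hiu
    rw [h3] at h2
    linarith
  -- the key bound against any Hamiltonian cycle
  have key : ∀ x ∈ Ω, cycleLength c (T n) ≤ 2 * x := by
    rintro x ⟨lopt, hnd, hcm, rfl⟩
    have hNV : lopt.length = Fintype.card V := by
      have h1 : lopt.toFinset = Finset.univ :=
        Finset.eq_univ_iff_forall.mpr (fun v => List.mem_toFinset.mpr (hcm v))
      rw [← List.toFinset_card_of_nodup hnd, h1, Finset.card_univ]
    have hNn : lopt.length = n + 2 := by omega
    have hN0 : 0 < lopt.length := by omega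
    have hwex : ∀ v : V, ∃ i : Fin lopt.length, lopt.get i = v :=
      fun v => List.mem_iff_get.mp (hcm v)
    choose pos_of hpos_of using hwex
    have hwinj : Function.Injective lopt.get := List.nodup_iff_injective_get.mp hnd
    set w : Fin lopt.length → V := lopt.get with hw
    set t : Fin n → Finset (Fin lopt.length) := fun m => Finset.univ.filter (fun i =>
        (w i ∈ T m.val ∧ w (nxt i) ∉ T m.val) ∨ (w i ∉ T m.val ∧ w (nxt i) ∈ T m.val))
      with ht
    have hall : ∀ M : Finset (Fin n), M.card ≤ (M.biUnion t).card := by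
      intro M
      rcases M.eq_empty_or_nonempty with rfl | hMne
      · simp
      set g : Fin lopt.length → ℕ := fun i => (M.filter (fun m => w i ∉ T m.val)).card with hg
      have hcross : ∀ i, g i ≠ g (nxt i) → i ∈ M.biUnion t := by
        intro i hgi
        by_contra hni
        apply hgi
        have hiff : ∀ m ∈ M, ((w i ∉ T m.val) ↔ (w (nxt i) ∉ T m.val)) := by
          intro m hm
          have hnt : i ∉ t m := fun hit => hni (Finset.mem_biUnion.mpr ⟨m, hm, hit⟩)
          rw [ht] at hnt
          simp only [Finset.mem_filter, Finset.mem_univ, true_and] at hnt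
          push_neg at hnt
          tauto
        simp only [hg]
        congr 1
        exact Finset.filter_congr hiff
      have hvalK : ∀ m : Fin n, m ∈ M →
          g (pos_of (km m.val m.isLt)) = (M.filter (fun m' => m' ≤ m)).card := by
        intro m hm
        simp only [hg]
        congr 1
        apply Finset.filter_congr
        intro m' hm'
        rw [hpos_of]
        constructor
        · intro hni
          by_contra hgt
          push_neg at hgt
          have h5 : m.val + 1 ≤ m'.val := hgt
          exact hni (hmono (m.val+1) m'.val h5 (Nat.le_of_lt m'.isLt) _ (hkm2 m.val m.isLt))
        · intro hle hin
          exact hkm1 m.val m.isLt (hmono m'.val m.val hle (Nat.le_of_lt m.isLt) _ hin)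
      have h0 : g (pos_of i0) = 0 := by
        simp only [hg, Finset.card_eq_zero]
        rw [Finset.filter_eq_empty_iff]
        intro m hm
        rw [hpos_of]
        have hi0 : i0 ∈ T 0 := by rw [hT0]; simp
        exact not_not_intro (hmono 0 m.val (Nat.zero_le _) (Nat.le_of_lt m.isLt) i0 hi0)
      have hmono2 : ∀ m1 m2 : Fin n, m2 ∈ M → m1 < m2 →
          (M.filter (fun m' => m' ≤ m1)).card < (M.filter (fun m' => m' ≤ m2)).card := by
        intro m1 m2 hm2 h12
        apply Finset.card_lt_card
        refine (Finset.ssubset_iff_of_subset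
          (Finset.monotone_filter_right M (fun x _ hx => le_trans hx (le_of_lt h12)))).mpr ?_
        exact ⟨m2, Finset.mem_filter.mpr ⟨hm2, le_refl m2⟩,
          fun hc => absurd (Finset.mem_filter.mp hc).2 (not_le.mpr h12)⟩
      have himg : (M.image fun m => (M.filter (fun m' => m' ≤ m)).card).card = M.card := by
        apply Finset.card_image_of_injOn
        intro m1 h1 m2 h2 heq
        by_contra hne12
        rcases Ne.lt_or_gt hne12 with h | h
        · exact absurd heq (Nat.ne_of_lt (hmono2 m1 m2 h2 h))
        · exact absurd heq.symm (Nat.ne_of_lt (hmono2 m2 m1 h1 h))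
      have h0notmem : (0 : ℕ) ∉ M.image fun m => (M.filter (fun m' => m' ≤ m)).card := by
        intro hc
        obtain ⟨m, hm, heq⟩ := Finset.mem_image.mp hc
        have hmem2 : m ∈ M.filter (fun m' => m' ≤ m) := Finset.mem_filter.mpr ⟨hm, le_refl m⟩
        have := Finset.card_pos.mpr ⟨m, hmem2⟩
        omega
      set A : Finset ℕ := insert 0 (M.image (fun m => (M.filter (fun m' => m' ≤ m)).card))
        with hA
      have hAsub : A ⊆ Finset.univ.image g := by
        intro v hv
        rw [hA, Finset.mem_insert] at hv
        rcases hv with rfl | hv2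
        · exact Finset.mem_image.mpr ⟨pos_of i0, Finset.mem_univ _, h0⟩
        · obtain ⟨m, hm, rfl⟩ := Finset.mem_image.mp hv2
          exact Finset.mem_image.mpr ⟨pos_of (km m.val m.isLt), Finset.mem_univ _, hvalK m hm⟩
      have hAcard : M.card + 1 ≤ A.card := by
        rw [hA, Finset.card_insert_of_notMem h0notmem, himg]
      have hMpos : 1 ≤ M.card := Finset.card_pos.mpr hMne
      have hnc : ∃ a b : Fin lopt.length, g a ≠ g b := by
        have h2 : 2 ≤ (Finset.univ.image g).card :=
          le_trans (by omega) (le_trans hAcard (Finset.card_le_card hAsub))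
        obtain ⟨v1, hv1, v2, hv2, hvne⟩ := Finset.one_lt_card.mp (lt_of_lt_of_le one_lt_two h2)
        obtain ⟨a, _, ha⟩ := Finset.mem_image.mp hv1
        obtain ⟨b, _, hb⟩ := Finset.mem_image.mp hv2
        exact ⟨a, b, by rw [ha, hb]; exact hvne⟩
      have hch : ∀ v ∈ Finset.univ.image g,
          ∃ q : Fin lopt.length, g q = v ∧ g (nxt q) ≠ v := by
        intro v hv
        obtain ⟨p, _, hp⟩ := Finset.mem_image.mp hv
        exact CIA.exists_change g hnc v ⟨p, hp⟩
      have hinj2 : (Finset.univ.image g).card ≤ (M.biUnion t).card := by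
        set f : ℕ → Fin lopt.length := fun v =>
          if h : ∃ q : Fin lopt.length, g q = v ∧ g (nxt q) ≠ v then h.choose else ⟨0, hN0⟩
          with hf
        apply Finset.card_le_card_of_injOn f
        · intro v hv
          have hex2 := hch v hv
          have hfv : f v = hex2.choose := by rw [hf]; simp only [dif_pos hex2]
          rw [hfv]
          have hspec := hex2.choose_spec
          exact hcross _ (by rw [hspec.1]; exact hspec.2.symm)
        · intro v1 hv1 v2 hv2 heq
          have hex1 := hch v1 hv1
          have hex2 := hch v2 hv2
          have e1 : g (f v1) = v1 := by
            have hfv : f v1 = hex1.choose := by rw [hf]; simp only [dif_pos hex1]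
            rw [hfv]; exact hex1.choose_spec.1
          have e2 : g (f v2) = v2 := by
            have hfv : f v2 = hex2.choose := by rw [hf]; simp only [dif_pos hex2]
            rw [hfv]; exact hex2.choose_spec.1
          rw [← e1, ← e2, heq]
      calc M.card ≤ M.card + 1 := by omega
        _ ≤ A.card := hAcard
        _ ≤ (Finset.univ.image g).card := Finset.card_le_card hAsub
        _ ≤ _ := hinj2
    obtain ⟨φ, hφinj, hφmem⟩ := (Finset.all_card_le_biUnion_card_iff_exists_injective t).mp hall
    have himcard : (Finset.univ.image φ).card = n := by
      rw [Finset.card_image_of_injective _ hφinj, Finset.card_univ, Fintype.card_fin]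
    have hex : ∃ e₀ : Fin lopt.length, e₀ ∉ Finset.univ.image φ := by
      by_contra h
      push_neg at h
      have hsub : (Finset.univ : Finset (Fin lopt.length)) ⊆ Finset.univ.image φ :=
        fun e _ => h e
      have := Finset.card_le_card hsub
      rw [himcard, Finset.card_univ, Fintype.card_fin] at this
      omega
    obtain ⟨e₀, he₀⟩ := hex
    set ec : Fin lopt.length → ℝ := fun i => c (w i) (w (nxt i)) with hec
    have hecnn : ∀ i, 0 ≤ ec i := fun i => hnonneg _ _
    -- base bound
    have hbase : cycleLength c (T 0) ≤ 2 * ec e₀ := by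
      have hne0 : w e₀ ≠ w (nxt e₀) := by
        intro h
        have h2 := hwinj h
        have hv : e₀.val = (e₀.val + 1) % lopt.length := congrArg Fin.val h2
        rcases Nat.lt_or_ge (e₀.val + 1) lopt.length with h' | h'
        · rw [Nat.mod_eq_of_lt h'] at hv; omega
        · have h4 : e₀.val + 1 = lopt.length := by have := e₀.isLt; omega
          rw [h4, Nat.mod_self] at hv
          have := e₀.isLt
          omega
      have h1 := hmin (w e₀) (w (nxt e₀)) hne0
      have hT0len : cycleLength c (T 0) = c i0 j0 + c j0 i0 := by
        rw [hT0]
        have hrot : ([i0, j0] : List V).rotate 1 = [j0, i0] := by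
          simpa using List.rotate_eq_drop_append_take (l := [i0, j0]) (n := 1) (by simp)
        rw [cycleLength, hrot]
        simp
      have hs := hsymm (w e₀) (w (nxt e₀))
      rw [hT0len]
      simp only [hec]
      linarith
    -- step bounds
    have hstepbound : ∀ m ∈ Finset.range n,
        cycleLength c (T (m+1)) - cycleLength c (T m) ≤
          (if h : m < n then 2 * ec (φ ⟨m, h⟩) else 0) := by
      intro m hm
      have hmn : m < n := Finset.mem_range.mp hm
      rw [dif_pos hmn]
      have hmem := hφmem ⟨m, hmn⟩
      rw [ht] at hmem
      simp only [Finset.mem_filter, Finset.mem_univ, true_and] at hmem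
      rcases hmem with ⟨h1, h2⟩ | ⟨h1, h2⟩
      · have h3 := hΔ m hmn (w (φ ⟨m, hmn⟩)) (w (nxt (φ ⟨m, hmn⟩))) h1 h2
        simp only [hec]
        linarith
      · have h3 := hΔ m hmn (w (nxt (φ ⟨m, hmn⟩))) (w (φ ⟨m, hmn⟩)) h2 h1
        have hs := hsymm (w (nxt (φ ⟨m, hmn⟩))) (w (φ ⟨m, hmn⟩))
        simp only [hec]
        linarith
    have htel : cycleLength c (T n) = cycleLength c (T 0) +
        ∑ m ∈ Finset.range n, (cycleLength c (T (m+1)) - cycleLength c (T m)) := by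
      rw [Finset.sum_range_sub (fun m => cycleLength c (T m))]
      ring
    have hsum1 : ∑ m ∈ Finset.range n, (cycleLength c (T (m+1)) - cycleLength c (T m)) ≤
        ∑ m ∈ Finset.range n, (if h : m < n then 2 * ec (φ ⟨m, h⟩) else 0) :=
      Finset.sum_le_sum hstepbound
    have hsum2 : ∑ m ∈ Finset.range n, (if h : m < n then 2 * ec (φ ⟨m, h⟩) else 0) =
        ∑ i : Fin n, 2 * ec (φ i) := by
      rw [← Fin.sum_univ_eq_sum_range (fun m => if h : m < n then 2 * ec (φ ⟨m, h⟩) else 0) n]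
      apply Finset.sum_congr rfl
      intro i _
      rw [dif_pos i.isLt]
    have hsum3 : ∑ i : Fin n, 2 * ec (φ i) = ∑ j ∈ Finset.univ.image φ, 2 * ec j := by
      rw [Finset.sum_image (g := φ) (f := fun j => 2 * ec j) (fun x _ y _ h => hφinj h)]
    have hsum4 : 2 * ec e₀ + ∑ j ∈ Finset.univ.image φ, 2 * ec j =
        ∑ j ∈ insert e₀ (Finset.univ.image φ), 2 * ec j := by
      rw [Finset.sum_insert (f := fun j => 2 * ec j) he₀]
    have hsum5 : ∑ j ∈ insert e₀ (Finset.univ.image φ), 2 * ec j ≤ ∑ j : Fin lopt.length, 2 * ec j :=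
      Finset.sum_le_sum_of_subset_of_nonneg (Finset.subset_univ _)
        (fun i _ _ => by have := hecnn i; linarith)
    have hopt : ∑ j : Fin lopt.length, ec j = cycleLength c lopt := by
      rw [CIA.cycleLength_eq_sum]
      exact Finset.sum_congr rfl (fun i _ => rfl)
    have h2sum : ∑ j : Fin lopt.length, 2 * ec j = 2 * cycleLength c lopt := by
      rw [← hopt, Finset.mul_sum]
    linarith
  have h2 : cycleLength c (T n) / 2 ≤ sInf Ω :=
    le_csInf hne (fun b hb => by linarith [key b hb])
  linarith
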